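/- Let f_1, …, f_N : ℝⁿ → ℝⁿ be continuous vector fields. Assume there exist a continuously differentiable function V : ℝⁿ → ℝ, a compact set B ⊆ ℝⁿ, and constants γ ∈ ℝ, ρ > 0 such that V(x) = γ for all x on the topological boundary of B, V(x) > γ for all x ∈ ℝⁿ \ B, and ∇V(x) · f_i(x) ≤ -ρ for all x ∈ ℝⁿ \ B and all i = 1, …, N. Then B is positively invariant for the switched system: every solution x with x(0) ∈ B satisfies x(t) ∈ B for all t ≥ 0. -/

import Mathlib

/-- A solution of the switched system determined by the vector fields `f i` on `ℝⁿ`: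
a function differentiable on `[0,∞)` such that at every time `t ≥ 0` its derivative
(within `[0,∞)`) is given by one of the vector fields (arbitrary switching). -/
def IsSwitchedSolution {n N : ℕ}
    (f : Fin N → EuclideanSpace ℝ (Fin n) → EuclideanSpace ℝ (Fin n))
    (x : ℝ → EuclideanSpace ℝ (Fin n)) : Prop :=
  ∀ t : ℝ, 0 ≤ t → ∃ i : Fin N, HasDerivWithinAt x (f i (x t)) (Set.Ici 0) t

/-- Under the Lyapunov-type conditions (`V = γ` on `∂B`, `V > γ` outside `B`, and
`∇V · f_i ≤ -ρ` outside `B`), the compact set `B` is positively invariant for the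
switched system. -/
theorem positively_invariant_of_lyapunov {n N : ℕ}
    (f : Fin N → EuclideanSpace ℝ (Fin n) → EuclideanSpace ℝ (Fin n))
    (hf : ∀ i, Continuous (f i))
    (V : EuclideanSpace ℝ (Fin n) → ℝ) (hV : ContDiff ℝ 1 V)
    (B : Set (EuclideanSpace ℝ (Fin n))) (hB : IsCompact B)
    (γ ρ : ℝ) (hρ : 0 < ρ)
    (hbd : ∀ x ∈ frontier B, V x = γ)
    (hgt : ∀ x ∉ B, V x > γ)
    (hdec : ∀ x ∉ B, ∀ i : Fin N, fderiv ℝ V x (f i x) ≤ -ρ) :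
    ∀ x : ℝ → EuclideanSpace ℝ (Fin n), IsSwitchedSolution f x →
      x 0 ∈ B → ∀ t : ℝ, 0 ≤ t → x t ∈ B := by
  intro x hsol hx0 t₁ ht₁
  by_contra hxt₁
  have hBclosed : IsClosed B := hB.isClosed
  -- x is continuous on [0, ∞)
  have hcontOn : ContinuousOn x (Set.Ici 0) := fun t ht => by
    obtain ⟨i, hi⟩ := hsol t ht
    exact hi.continuousWithinAt
  have ht₁pos : 0 < t₁ := by
    rcases lt_or_eq_of_le ht₁ with h | h
    · exact h
    · exact absurd (h ▸ hx0) hxt₁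
  -- the set of times in [0, t₁] where x is in B
  set S : Set ℝ := Set.Icc 0 t₁ ∩ x ⁻¹' B with hS
  have hScl : IsClosed S :=
    (hcontOn.mono (Set.Icc_subset_Ici_self)).preimage_isClosed_of_isClosed
      isClosed_Icc hBclosed
  have hScompact : IsCompact S :=
    isCompact_Icc.of_isClosed_subset hScl Set.inter_subset_left
  have hSne : S.Nonempty := ⟨0, ⟨le_rfl, ht₁⟩, hx0⟩
  set s := sSup S with hs
  have hsmem : s ∈ S := hScompact.sSup_mem hSne
  have hs0 : 0 ≤ s := hsmem.1.1
  have hsB : x s ∈ B := hsmem.2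
  have hst₁ : s < t₁ := lt_of_le_of_ne hsmem.1.2 (fun h => hxt₁ (h ▸ hsB))
  -- after s, x is outside B
  have hnotB : ∀ u ∈ Set.Ioc s t₁, x u ∉ B := by
    intro u hu hub
    have : u ∈ S := ⟨⟨hs0.trans hu.1.le, hu.2⟩, hub⟩
    exact absurd (le_csSup hScompact.bddAbove this) (not_le_of_gt hu.1)
  -- x s is on the frontier of B
  have hfr : x s ∈ frontier B := by
    rw [frontier_eq_closure_inter_closure]
    refine ⟨subset_closure hsB, ?_⟩
    have htend : Filter.Tendsto x (nhdsWithin s (Set.Ioi s)) (nhds (x s)) :=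
      (hcontOn s (Set.mem_Ici.2 hs0)).mono_left
        (nhdsWithin_mono s (fun u hu => le_trans hs0 (le_of_lt hu)))
    exact mem_closure_of_tendsto htend
      (Filter.eventually_iff_exists_mem.2 ⟨Set.Ioc s t₁,
        Ioc_mem_nhdsGT_of_mem ⟨le_rfl, hst₁⟩, fun u hu => hnotB u hu⟩)
  have hVs : V (x s) = γ := hbd _ hfr
  -- V ∘ x is strictly decreasing on [s, t₁]
  have hVd : Differentiable ℝ V := hV.differentiable one_ne_zero
  have hanti : StrictAntiOn (V ∘ x) (Set.Icc s t₁) := by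
    apply strictAntiOn_of_deriv_neg (convex_Icc s t₁)
    · exact hV.continuous.comp_continuousOn
        (hcontOn.mono (fun u hu => le_trans hs0 hu.1))
    · intro u hu
      rw [interior_Icc] at hu
      have hupos : 0 < u := lt_of_le_of_lt hs0 hu.1
      obtain ⟨i, hi⟩ := hsol u hupos.le
      have hx' : HasDerivAt x (f i (x u)) u := hi.hasDerivAt (Ici_mem_nhds hupos)
      have hg' : HasDerivAt (V ∘ x) (fderiv ℝ V (x u) (f i (x u))) u :=
        (hVd (x u)).hasFDerivAt.comp_hasDerivAt u hx'
      rw [hg'.deriv]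
      have := hdec (x u) (hnotB u ⟨hu.1, hu.2.le⟩) i
      linarith
  have h1 : (V ∘ x) t₁ < (V ∘ x) s :=
    hanti ⟨le_rfl, hst₁.le⟩ ⟨hst₁.le, le_rfl⟩ hst₁
  have h2 : γ < V (x t₁) := hgt _ hxt₁
  simp only [Function.comp] at h1
  rw [hVs] at h1
  linarith
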